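/- Let p be a prime and n ≥ 1. Every polynomial function on ℤ/p^nℤ is represented by exactly one polynomial f ∈ ℤ[x] of the form f = Σ_{k=0}^{β_p(n)−1} a_k·(x)_k with integer coefficients satisfying 0 ≤ a_k < p^{n−α_p(k)} for all k. -/

import Mathlib

/-- `α_p(n)`: the `p`-adic valuation of `n!`. -/
def alphaP (p n : ℕ) : ℕ := padicValNat p (Nat.factorial n)

/-- `β_p(n)`: the least `m` with `α_p(m) ≥ n`. -/
noncomputable def betaP (p n : ℕ) : ℕ := sInf {m | n ≤ alphaP p m}

section Aux

open Polynomial Finset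

variable {p : ℕ}

lemma pow_alphaP_dvd (p k : ℕ) : p ^ alphaP p k ∣ Nat.factorial k :=
  pow_padicValNat_dvd

lemma alphaP_mono (hp : p.Prime) {j k : ℕ} (h : j ≤ k) : alphaP p j ≤ alphaP p k := by
  haveI : Fact p.Prime := ⟨hp⟩
  exact (padicValNat_dvd_iff_le (Nat.factorial_ne_zero k)).mp
    ((pow_alphaP_dvd p j).trans (Nat.factorial_dvd_factorial h))

lemma betaP_mem (hp : p.Prime) (n : ℕ) : n ≤ alphaP p (betaP p n) := by
  haveI : Fact p.Prime := ⟨hp⟩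
  have hne : {m | n ≤ alphaP p m}.Nonempty := by
    refine ⟨p ^ n, ?_⟩
    have hd : p ^ n ∣ Nat.factorial (p ^ n) :=
      Nat.dvd_factorial (Nat.pow_pos hp.pos) le_rfl
    exact (padicValNat_dvd_iff_le (Nat.factorial_ne_zero _)).mp hd
  exact csInf_mem hne

lemma alphaP_lt_of_lt_betaP (hp : p.Prime) {n k : ℕ} (h : k < betaP p n) :
    alphaP p k < n := by
  by_contra hc
  push_neg at hc
  have : betaP p n ≤ k := Nat.sInf_le hc
  omega

lemma alphaP_ge_of_betaP_le (hp : p.Prime) {n k : ℕ} (h : betaP p n ≤ k) :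
    n ≤ alphaP p k :=
  (betaP_mem hp n).trans (alphaP_mono hp h)

/-- Evaluation of an integer polynomial at a natural cast in `ZMod N`. -/
lemma aeval_natCast_zmod (N : ℕ) (f : Polynomial ℤ) (m : ℕ) :
    Polynomial.aeval (m : ZMod N) f = ((f.eval (m : ℤ) : ℤ) : ZMod N) := by
  rw [Polynomial.aeval_def, show ((m : ZMod N)) = (((m : ℤ) : ZMod N)) by push_cast; ring,
    Polynomial.eval₂_at_intCast]
  simp

lemma aeval_fun_eq_iff (N : ℕ) [NeZero N] (f F : Polynomial ℤ) :
    ((fun x : ZMod N => Polynomial.aeval x f) = fun x => Polynomial.aeval x F) ↔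
      ∀ m : ℕ, (N : ℤ) ∣ (f - F).eval (m : ℤ) := by
  constructor
  · intro h m
    have := congrFun h (m : ZMod N)
    rw [aeval_natCast_zmod, aeval_natCast_zmod] at this
    rw [← ZMod.intCast_zmod_eq_zero_iff_dvd]
    rw [Polynomial.eval_sub]
    push_cast
    rw [this]; ring
  · intro h
    funext x
    obtain ⟨m, rfl⟩ := ZMod.natCast_zmod_surjective x
    rw [aeval_natCast_zmod, aeval_natCast_zmod]
    have := (ZMod.intCast_zmod_eq_zero_iff_dvd _ N).mpr (h m)
    rw [Polynomial.eval_sub] at this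
    push_cast at this
    exact sub_eq_zero.mp this

/-- every term `c * (x)_k` with `p^(n - α_p(k)) ∣ c` evaluates to a multiple of `p^n`. -/
lemma term_dvd (hp : p.Prime) (n k : ℕ) {c : ℤ} (hc : (p : ℤ) ^ (n - alphaP p k) ∣ c)
    (m : ℕ) : (p : ℤ) ^ n ∣ c * (m.descFactorial k : ℤ) := by
  have h1 : (p : ℤ) ^ (min (alphaP p k) n) ∣ (m.descFactorial k : ℤ) := by
    have : p ^ (min (alphaP p k) n) ∣ m.descFactorial k :=
      (pow_dvd_pow p (min_le_left _ _)).trans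
        ((pow_alphaP_dvd p k).trans (Nat.factorial_dvd_descFactorial m k))
    exact_mod_cast Int.natCast_dvd_natCast.mpr this
  have he : n - alphaP p k + min (alphaP p k) n = n := by omega
  calc (p : ℤ) ^ n = (p : ℤ) ^ (n - alphaP p k) * (p : ℤ) ^ (min (alphaP p k) n) := by
        rw [← pow_add, he]
    _ ∣ c * (m.descFactorial k : ℤ) := mul_dvd_mul hc h1

/-- core uniqueness divisibility: from `p^n ∣ d * k!` conclude `p^(n-α) ∣ d`. -/
lemma dvd_of_dvd_mul_factorial (hp : p.Prime) {n k : ℕ} {d : ℤ}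
    (h : (p : ℤ) ^ n ∣ d * (Nat.factorial k : ℤ)) :
    (p : ℤ) ^ (n - alphaP p k) ∣ d := by
  haveI : Fact p.Prime := ⟨hp⟩
  rcases eq_or_ne d 0 with rfl | hd
  · exact dvd_zero _
  have hnat : p ^ n ∣ d.natAbs * Nat.factorial k := by
    have := Int.natAbs_dvd_natAbs.mpr h
    simpa [Int.natAbs_mul, Int.natAbs_pow] using this
  have hmul : padicValNat p (d.natAbs * Nat.factorial k)
      = padicValNat p d.natAbs + alphaP p k :=
    padicValNat.mul (Int.natAbs_ne_zero.mpr hd) (Nat.factorial_ne_zero k)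
  have hle : n ≤ padicValNat p d.natAbs + alphaP p k := by
    rw [← hmul]
    exact (padicValNat_dvd_iff_le
      (Nat.mul_ne_zero (Int.natAbs_ne_zero.mpr hd) (Nat.factorial_ne_zero k))).mp hnat
  have : p ^ (n - alphaP p k) ∣ d.natAbs :=
    (padicValNat_dvd_iff_le (Int.natAbs_ne_zero.mpr hd)).mpr (by omega)
  have h2 : ((p : ℤ)) ^ (n - alphaP p k) ∣ (d.natAbs : ℤ) := by
    exact_mod_cast Int.natCast_dvd_natCast.mpr this
  exact h2.trans (Int.natAbs_dvd.mpr dvd_rfl)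

/-- Every integer polynomial is an integer combination of falling factorials. -/
lemma exists_desc_repr : ∀ d : ℕ, ∀ f : Polynomial ℤ, f.natDegree ≤ d →
    ∃ b : ℕ → ℤ, f = ∑ k ∈ Finset.range (d + 1), C (b k) * descPochhammer ℤ k := by
  intro d
  induction d with
  | zero =>
    intro f hf
    refine ⟨fun _ => f.coeff 0, ?_⟩
    rw [Polynomial.eq_C_of_natDegree_le_zero hf]
    simp [descPochhammer_zero]
  | succ d ih =>
    intro f hf
    set c := f.coeff (d + 1) with hc
    set gq := f - C c * descPochhammer ℤ (d + 1) with hg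
    have hdeg : gq.natDegree ≤ d := by
      rw [Polynomial.natDegree_le_iff_coeff_eq_zero]
      intro m hm
      rw [hg, Polynomial.coeff_sub, Polynomial.coeff_C_mul]
      rcases eq_or_lt_of_le (Nat.succ_le_of_lt hm) with h1 | h1
      · have hmon := monic_descPochhammer ℤ (d + 1)
        have hdd : (descPochhammer ℤ (d + 1)).natDegree = d + 1 :=
          descPochhammer_natDegree ℤ (d + 1)
        have : (descPochhammer ℤ (d + 1)).coeff (d + 1) = 1 := by
          have := hmon.coeff_natDegree
          rwa [hdd] at this
        rw [← h1, this, mul_one, hc, sub_self]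
      · have h2 : f.coeff m = 0 :=
          Polynomial.coeff_eq_zero_of_natDegree_lt (lt_of_le_of_lt hf h1)
        have h3 : (descPochhammer ℤ (d + 1)).coeff m = 0 := by
          apply Polynomial.coeff_eq_zero_of_natDegree_lt
          rw [descPochhammer_natDegree]; exact h1
        rw [h2, h3, mul_zero, sub_zero]
    obtain ⟨b, hb⟩ := ih gq hdeg
    refine ⟨fun k => if k = d + 1 then c else b k, ?_⟩
    rw [Finset.sum_range_succ]
    have hsum : ∑ k ∈ Finset.range (d + 1),
        C (if k = d + 1 then c else b k) * descPochhammer ℤ k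
        = ∑ k ∈ Finset.range (d + 1), C (b k) * descPochhammer ℤ k := by
      apply Finset.sum_congr rfl
      intro k hk
      rw [if_neg (Nat.ne_of_lt (Finset.mem_range.mp hk))]
    have hcoeff : (fun k => if k = d + 1 then c else b k) (d + 1) = c := by simp
    rw [hsum, hcoeff, ← hb, hg]
    ring

end Aux

/-- Every polynomial function on `ℤ/p^nℤ` is represented by a unique polynomial
of the form `Σ_{k=0}^{β_p(n)-1} a_k (x)_k` with `0 ≤ a_k < p^{n - α_p(k)}`
for all `k`.  (For `k ≥ β_p(n)` the bound forces `a_k = 0`, so the coefficient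
sequence below carries exactly the coefficients `a_0, …, a_{β_p(n)-1}`.) -/
theorem unique_canonical_representation (p : ℕ) (hp : p.Prime) (n : ℕ) (hn : 1 ≤ n)
    (g : ZMod (p ^ n) → ZMod (p ^ n))
    (hg : ∃ f : Polynomial ℤ, g = fun x => Polynomial.aeval x f) :
    ∃! a : ℕ → ℤ,
      (∀ k, 0 ≤ a k ∧ a k < (p : ℤ) ^ (n - alphaP p k)) ∧
      g = fun x => Polynomial.aeval x
        (∑ k ∈ Finset.range (betaP p n), Polynomial.C (a k) * descPochhammer ℤ k) := by
  classical
  haveI : Fact p.Prime := ⟨hp⟩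
  haveI : NeZero (p ^ n) := ⟨pow_ne_zero n hp.pos.ne'⟩
  obtain ⟨f, hf⟩ := hg
  set β := betaP p n with hβ
  -- existence
  set M := max f.natDegree β with hM
  obtain ⟨b, hb⟩ := exists_desc_repr M f (le_max_left _ _)
  set a : ℕ → ℤ := fun k =>
    if k < β then b k % ((p : ℤ) ^ (n - alphaP p k)) else 0 with ha
  have hpow_pos : ∀ k : ℕ, (0 : ℤ) < (p : ℤ) ^ (n - alphaP p k) := fun k =>
    pow_pos (by exact_mod_cast hp.pos) _
  have hbounds : ∀ k, 0 ≤ a k ∧ a k < (p : ℤ) ^ (n - alphaP p k) := by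
    intro k
    by_cases hk : k < β
    · have : a k = b k % ((p : ℤ) ^ (n - alphaP p k)) := by simp only [ha, if_pos hk]
      rw [this]
      exact ⟨Int.emod_nonneg _ (hpow_pos k).ne', Int.emod_lt_of_pos _ (hpow_pos k)⟩
    · have : a k = 0 := by simp only [ha, if_neg hk]
      rw [this]
      exact ⟨le_rfl, hpow_pos k⟩
  -- the represented polynomial, extended over range (M+1)
  set F := ∑ k ∈ Finset.range β, Polynomial.C (a k) * descPochhammer ℤ k with hF
  have hFext : F = ∑ k ∈ Finset.range (M + 1), Polynomial.C (a k) * descPochhammer ℤ k := by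
    rw [hF]
    apply Finset.sum_subset
    · intro k hk
      rw [Finset.mem_range] at hk ⊢
      omega
    · intro k _ hk
      rw [Finset.mem_range, not_lt] at hk
      have : a k = 0 := by simp only [ha, if_neg (by omega : ¬ k < β)]
      rw [this]; simp
  have hdvd : ∀ m : ℕ, ((p ^ n : ℕ) : ℤ) ∣ (f - F).eval (m : ℤ) := by
    intro m
    rw [hb, hFext, ← Finset.sum_sub_distrib]
    have hterm : ∀ k ∈ Finset.range (M + 1),
        ((p : ℤ) ^ n) ∣ (Polynomial.C (b k) * descPochhammer ℤ k
          - Polynomial.C (a k) * descPochhammer ℤ k).eval (m : ℤ) := by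
      intro k _
      have heval : (Polynomial.C (b k) * descPochhammer ℤ k
          - Polynomial.C (a k) * descPochhammer ℤ k).eval (m : ℤ)
          = (b k - a k) * (m.descFactorial k : ℤ) := by
        rw [Polynomial.eval_sub, Polynomial.eval_mul, Polynomial.eval_mul,
          Polynomial.eval_C, Polynomial.eval_C,
          descPochhammer_eval_eq_descFactorial]
        ring
      rw [heval]
      apply term_dvd hp
      by_cases hk : k < β
      · have hak : a k = b k % ((p : ℤ) ^ (n - alphaP p k)) := by
          simp only [ha, if_pos hk]
        rw [hak]
        exact Int.dvd_self_sub_of_emod_eq rfl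
      · have hak : a k = 0 := by simp only [ha, if_neg hk]
        rw [hak, sub_zero]
        have hα : n ≤ alphaP p k := alphaP_ge_of_betaP_le hp (not_lt.mp hk)
        have h0 : n - alphaP p k = 0 := by omega
        rw [h0, pow_zero]
        exact one_dvd _
    have := Finset.dvd_sum hterm
    rw [Polynomial.eval_finset_sum]
    push_cast
    exact this
  refine ⟨a, ⟨hbounds, ?_⟩, ?_⟩
  · rw [hf, ← hF]
    exact (aeval_fun_eq_iff (p ^ n) f F).mpr (by exact_mod_cast hdvd)
  -- uniqueness
  · rintro a' ⟨hb', heq'⟩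
    -- both a' and a represent g; show a' = a
    have hga : g = fun x : ZMod (p ^ n) => Polynomial.aeval x F := by
      rw [hf]
      exact (aeval_fun_eq_iff (p ^ n) f F).mpr (by exact_mod_cast hdvd)
    set F' := ∑ k ∈ Finset.range β, Polynomial.C (a' k) * descPochhammer ℤ k with hF'
    have hdiff : ∀ m : ℕ, ((p : ℤ) ^ n) ∣ (F' - F).eval (m : ℤ) := by
      have := (aeval_fun_eq_iff (p ^ n) F' F).mp (by rw [← hga, ← heq'])
      intro m
      have h := this m
      push_cast at h
      exact_mod_cast h
    have hdiffsum : ∀ m : ℕ, ((p : ℤ) ^ n) ∣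
        ∑ k ∈ Finset.range β, (a' k - a k) * (m.descFactorial k : ℤ) := by
      intro m
      have h := hdiff m
      rw [hF', hF, ← Finset.sum_sub_distrib, Polynomial.eval_finset_sum] at h
      convert h using 2 with k
      rw [Polynomial.eval_sub, Polynomial.eval_mul, Polynomial.eval_mul,
        Polynomial.eval_C, Polynomial.eval_C, descPochhammer_eval_eq_descFactorial]
      ring
    -- a' k = a k for k < β, by strong induction
    have hlt : ∀ k, k < β → a' k = a k := by
      intro k
      induction k using Nat.strong_induction_on with
      | _ k ih =>
        intro hkβ
        have hsum := hdiffsum k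
        have hsingle : ∑ j ∈ Finset.range β, (a' j - a j) * ((k).descFactorial j : ℤ)
            = (a' k - a k) * (Nat.factorial k : ℤ) := by
          rw [Finset.sum_eq_single k]
          · rw [Nat.descFactorial_self]
          · intro j hj hjk
            rcases lt_or_gt_of_ne hjk with h1 | h1
            · rw [ih j h1 (lt_trans h1 hkβ), sub_self, zero_mul]
            · rw [Nat.descFactorial_eq_zero_iff_lt.mpr h1]
              simp
          · intro hk
            exact absurd (Finset.mem_range.mpr hkβ) hk
        rw [hsingle] at hsum
        have hdvd2 : (p : ℤ) ^ (n - alphaP p k) ∣ (a' k - a k) :=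
          dvd_of_dvd_mul_factorial hp hsum
        have habs : |a' k - a k| < (p : ℤ) ^ (n - alphaP p k) := by
          have h1 := hb' k
          have h2 := hbounds k
          rw [abs_lt]
          constructor <;> linarith [h1.1, h1.2, h2.1, h2.2]
        have := Int.eq_zero_of_abs_lt_dvd hdvd2 habs
        linarith
    funext k
    by_cases hk : k < β
    · exact hlt k hk
    · -- for k ≥ β: n - alphaP p k = 0, so both coefficients are 0
      have hα : n ≤ alphaP p k := alphaP_ge_of_betaP_le hp (not_lt.mp hk)
      have h0 : n - alphaP p k = 0 := by omega
      have h1 := hb' k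
      have h2 := hbounds k
      rw [h0, pow_zero] at h1 h2
      have hak : a k = 0 := by omega
      have ha'k : a' k = 0 := by omega
      rw [hak, ha'k]
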